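/- Let H be the height process of a rooted ordered tree on m vertices (heights in depth-first order) and C its contour process. Define K(i) = 2i - H(i) for 0 ≤ i ≤ m-1. Then C(K(i)) = H(i) for all i, i.e., the contour process visits the (i+1)-st vertex in depth-first order at time K(i), at which point it is at the height of that vertex. -/

import Mathlib

/-- A finite rooted ordered (plane) tree. -/
inductive PTree : Type
  | node : List PTree → PTree

namespace PTree

/-- The number of vertices of a plane tree. -/
def size : PTree → ℕ
  | .node ts => 1 + (ts.attach.map (fun ⟨t, _⟩ => size t)).sum

/-- The height process: the list of the heights of the vertices, in
depth-first order, when the root is at height `h`. -/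
def heights : PTree → ℕ → List ℕ
  | .node ts, h => h :: (ts.attach.map (fun ⟨t, _⟩ => heights t (h + 1))).flatten

/-- The contour process: the list of heights visited by the contour
exploration of the tree (one entry per unit of time; each edge is traversed
twice), when the root is at height `h`. -/
def contour : PTree → ℕ → List ℕ
  | .node ts, h =>
      h :: (ts.attach.map (fun ⟨t, _⟩ => contour t (h + 1) ++ [h])).flatten


lemma size_node (ts : List PTree) : size (node ts) = 1 + (ts.map size).sum := by
  rw [size, List.attach_map_val]

lemma heights_node (ts : List PTree) (h : ℕ) :
    heights (node ts) h = h :: (ts.map (fun t => heights t (h+1))).flatten := by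
  rw [heights]; congr 1; congr 1; exact List.attach_map_val (l := ts) (f := fun t => heights t (h+1))

lemma contour_node (ts : List PTree) (h : ℕ) :
    contour (node ts) h = h :: (ts.map (fun t => contour t (h+1) ++ [h])).flatten := by
  rw [contour]; congr 1; congr 1; exact List.attach_map_val (l := ts) (f := fun t => contour t (h+1) ++ [h])

lemma one_le_size (t : PTree) : 1 ≤ t.size := by
  obtain ⟨ts⟩ := t; rw [size_node]; omega

theorem length_heights : ∀ (t : PTree) (h : ℕ), (t.heights h).length = t.size
  | .node ts, h => by
    rw [heights_node, size_node, List.length_cons, List.length_flatten, List.map_map]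
    have : List.map (List.length ∘ fun t => heights t (h+1)) ts = ts.map size :=
      List.map_congr_left (fun t ht => length_heights t (h+1))
    rw [this]; omega

theorem length_contour : ∀ (t : PTree) (h : ℕ),
    (t.contour h).length = 2 * t.size - 1
  | .node ts, h => by
    rw [contour_node, size_node, List.length_cons, List.length_flatten, List.map_map]
    have : List.map (List.length ∘ fun t => contour t (h+1) ++ [h]) ts
        = ts.map (fun t => 2 * size t) := by
      apply List.map_congr_left
      intro t ht
      simp [length_contour t (h+1)]
      have := one_le_size t; omega
    rw [this]
    have : (ts.map (fun t => 2 * size t)).sum = 2 * (ts.map size).sum := by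
      exact List.sum_map_mul_left ts size 2
    rw [this]; omega

end PTree

namespace PTree

lemma forest_bound (ts : List PTree) (h : ℕ)
    (IH : ∀ t ∈ ts, ∀ (h' i : ℕ), i < t.size →
      h' ≤ (t.heights h').getD i 0 ∧ (t.heights h').getD i 0 ≤ h' + i) :
    ∀ j, j < (ts.map size).sum →
      h + 1 ≤ ((ts.map (fun t => heights t (h+1))).flatten).getD j 0 ∧
      ((ts.map (fun t => heights t (h+1))).flatten).getD j 0 ≤ h + 1 + j := by
  induction ts with
  | nil => simp
  | cons t rest ih =>
    intro j hj
    simp only [List.map_cons, List.flatten_cons, List.sum_cons] at hj ⊢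
    by_cases hcase : j < t.size
    · rw [List.getD_append _ _ _ _ (by rw [length_heights]; exact hcase)]
      have := IH t (by simp) (h+1) j hcase
      omega
    · rw [List.getD_append_right _ _ _ _ (by rw [length_heights]; omega)]
      rw [length_heights]
      have := ih (fun t' ht' => IH t' (by simp [ht'])) (j - t.size) (by omega)
      omega

theorem heights_bound : ∀ (t : PTree) (h i : ℕ), i < t.size →
    h ≤ (t.heights h).getD i 0 ∧ (t.heights h).getD i 0 ≤ h + i
  | .node ts, h, i, hi => by
    rw [heights_node]
    cases i with
    | zero => simp
    | succ j =>
      rw [List.getD_cons_succ]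
      have hj : j < (ts.map size).sum := by rw [size_node] at hi; omega
      have := forest_bound ts h (fun t ht h' i hi => heights_bound t h' i hi) j hj
      omega

lemma forest_main (ts : List PTree) (h : ℕ)
    (IH : ∀ t ∈ ts, ∀ (h' i : ℕ), i < t.size →
      (t.contour h').getD (2*i - ((t.heights h').getD i 0 - h')) 0
        = (t.heights h').getD i 0) :
    ∀ j, j < (ts.map size).sum →
      ((ts.map (fun t => contour t (h+1) ++ [h])).flatten).getD
          (2*j - (((ts.map (fun t => heights t (h+1))).flatten).getD j 0 - (h+1))) 0
        = ((ts.map (fun t => heights t (h+1))).flatten).getD j 0 := by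
  induction ts with
  | nil => simp
  | cons t rest ih =>
    intro j hj
    simp only [List.map_cons, List.flatten_cons, List.sum_cons] at hj ⊢
    have hbt : ∀ t' ∈ (t :: rest), ∀ (h' i : ℕ), i < t'.size →
        h' ≤ (t'.heights h').getD i 0 ∧ (t'.heights h').getD i 0 ≤ h' + i :=
      fun t' _ h' i hi => heights_bound t' h' i hi
    by_cases hcase : j < t.size
    · have hH : (t.heights (h+1) ++ (rest.map (fun t => heights t (h+1))).flatten).getD j 0
          = (t.heights (h+1)).getD j 0 :=
        List.getD_append _ _ _ _ (by rw [length_heights]; exact hcase)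
      rw [hH]
      have hb := heights_bound t (h+1) j hcase
      set H' := (t.heights (h+1)).getD j 0 with hH'
      have hlt : 2*j - (H' - (h+1)) < (t.contour (h+1)).length := by
        rw [length_contour]
        have := one_le_size t
        omega
      rw [List.getD_append _ _ _ _ (by simp; omega)]
      rw [List.getD_append _ _ _ _ hlt]
      exact IH t (by simp) (h+1) j hcase
    · have hH : (t.heights (h+1) ++ (rest.map (fun t => heights t (h+1))).flatten).getD j 0
          = ((rest.map (fun t => heights t (h+1))).flatten).getD (j - t.size) 0 := by
        rw [List.getD_append_right _ _ _ _ (by rw [length_heights]; omega), length_heights]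
      rw [hH]
      set j' := j - t.size with hj'
      have hj'lt : j' < (rest.map size).sum := by omega
      have hb := forest_bound rest h (fun t' ht' h' i hi => heights_bound t' h' i hi) j' hj'lt
      set H' := ((rest.map (fun t => heights t (h+1))).flatten).getD j' 0 with hH'
      have hlen : (t.contour (h+1) ++ [h]).length = 2 * t.size := by
        simp [length_contour]
        have := one_le_size t
        omega
      rw [List.getD_append_right _ _ _ _ (by rw [hlen]; omega)]
      rw [hlen]
      have harith : 2*j - (H' - (h+1)) - 2 * t.size = 2*j' - (H' - (h+1)) := by omega
      rw [harith]
      exact ih (fun t' ht' h' i hi => IH t' (by simp [ht']) h' i hi) j' hj'lt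

theorem contour_heights : ∀ (t : PTree) (h i : ℕ), i < t.size →
    (t.contour h).getD (2*i - ((t.heights h).getD i 0 - h)) 0
      = (t.heights h).getD i 0
  | .node ts, h, i, hi => by
    rw [heights_node, contour_node]
    cases i with
    | zero => simp
    | succ j =>
      rw [List.getD_cons_succ]
      have hj : j < (ts.map size).sum := by rw [size_node] at hi; omega
      have hb := forest_bound ts h (fun t ht h' i hi => heights_bound t h' i hi) j hj
      set H' := ((ts.map (fun t => heights t (h+1))).flatten).getD j 0 with hH'
      have harith : 2*(j+1) - (H' - h) = (2*j - (H' - (h+1))) + 1 := by omega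
      rw [harith, List.getD_cons_succ]
      exact forest_main ts h (fun t ht h' i hi => contour_heights t h' i hi) j hj

end PTree




/-- Let `H` be the height process of a rooted ordered tree
on `m` vertices and `C` its contour process, and set `K(i) = 2i - H(i)`.
Then `C(K(i)) = H(i)` for every `0 ≤ i ≤ m - 1`: the contour process visits
the `(i+1)`-st vertex in depth-first order at time `K(i)`, at which moment it
is at the height of that vertex. -/
theorem contour_at_K_eq_height (t : PTree) (i : ℕ) (hi : i < t.size) :
    (t.contour 0).getD (2 * i - (t.heights 0).getD i 0) 0
      = (t.heights 0).getD i 0 := by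
  have := PTree.contour_heights t 0 i hi
  simpa using this
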